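/- Let V be a finite set, T ≥ 1, and for each t let p_t^u, p_t^r be strictly positive probability mass functions on V with max over t and x of max{p_t^u(x)/p_t^r(x), p_t^r(x)/p_t^u(x)} ≤ M for some M > 1. Let p_t^d = α·p_t^r + (1−α)·p_t^u with α ∈ (0,1). Then (1/T)·Σ_{t=1}^T D_KL(p_t^u ‖ p_t^r) ≤ (log M)·(M/(M−1))·(√2/(1−α))·√((1/T)·Σ_{t=1}^T JS(p_t^d, p_t^r)). -/

import Mathlib

open Finset

/-- Kullback–Leibler divergence (natural log). -/
noncomputable def KL {V : Type*} [Fintype V] (p q : V → ℝ) : ℝ :=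
  ∑ x, p x * Real.log (p x / q x)

/-- Jensen–Shannon divergence. -/
noncomputable def JS {V : Type*} [Fintype V] (p q : V → ℝ) : ℝ :=
  (1 / 2) * KL p (fun x => (p x + q x) / 2) + (1 / 2) * KL q (fun x => (p x + q x) / 2)

private lemma log_lb {t : ℝ} (ht : 1 ≤ t) : 2 - 4 / (t + 1) ≤ Real.log t := by
  set F : ℝ → ℝ := fun s => Real.log s - (2 - 4 * (s + 1)⁻¹) with hF
  have hder : ∀ s ∈ Set.Ici (1:ℝ), HasDerivAt F (s⁻¹ - 4 * (s+1)⁻¹^2) s := by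
    intro s hs
    have hs0 : s ≠ 0 := by simp at hs; linarith
    have hs1 : s + 1 ≠ 0 := by simp at hs; linarith
    have d1 : HasDerivAt (fun s : ℝ => (s+1)⁻¹) (-1 / (s+1)^2) s :=
      ((hasDerivAt_id s).add_const 1).inv hs1
    have d2 : HasDerivAt (fun s : ℝ => 2 - 4 * (s+1)⁻¹) (0 - 4 * (-1 / (s+1)^2)) s :=
      (hasDerivAt_const s 2).sub (d1.const_mul 4)
    have := (Real.hasDerivAt_log hs0).sub d2
    refine this.congr_deriv ?_
    rw [inv_pow]
    field_simp
    ring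
  have hmono : MonotoneOn F (Set.Ici 1) := by
    apply monotoneOn_of_deriv_nonneg (convex_Ici 1)
    · intro s hs
      exact ((hder s hs).differentiableAt.continuousAt).continuousWithinAt
    · rw [interior_Ici]
      intro s hs
      exact ((hder s (Set.mem_Ici.2 (le_of_lt hs))).differentiableAt).differentiableWithinAt
    · rw [interior_Ici]
      intro s hs
      rw [(hder s (Set.mem_Ici.2 (le_of_lt hs))).deriv]
      have hs1 : (1:ℝ) < s := hs
      have h1 : (0:ℝ) < s := by linarith
      have h2 : (0:ℝ) < s + 1 := by linarith
      have h4 : 4 * (s+1)⁻¹^2 = 4 / (s+1)^2 := by rw [inv_pow]; ring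
      rw [sub_nonneg, h4, ← one_div, div_le_div_iff₀ (by positivity) h1]
      nlinarith [sq_nonneg (s - 1)]
  have h01 := hmono (Set.self_mem_Ici) (Set.mem_Ici.2 ht) ht
  have hF1 : F 1 = 0 := by simp [hF]; norm_num
  have : 0 ≤ F t := by rw [← hF1]; exact h01
  simp only [hF] at this
  have : 4 * (t+1)⁻¹ = 4 / (t+1) := by rw [div_eq_mul_inv]
  linarith [ (by rw [div_eq_mul_inv] : (4:ℝ) / (t+1) = 4 * (t+1)⁻¹) , h01, hF1,
    (by simp [hF] : F t = Real.log t - (2 - 4*(t+1)⁻¹)) ]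

private noncomputable def Gf : ℝ → ℝ :=
  fun x => x * Real.log (2*x) + (1-x) * Real.log (2*(1-x)) - 2*(x-1/2)^2

private lemma Gf_hasDeriv {x : ℝ} (hx : x ∈ Set.Ioo (0:ℝ) 1) :
    HasDerivAt Gf (Real.log (2*x) - Real.log (2*(1-x)) - (4*x - 2)) x := by
  have hx0 : x ≠ 0 := ne_of_gt hx.1
  have h1x : (0:ℝ) < 1 - x := by linarith [hx.2]
  have h2x : (2:ℝ)*x ≠ 0 := by positivity
  have h21x : (2:ℝ)*(1-x) ≠ 0 := by positivity
  have d1 : HasDerivAt (fun y : ℝ => Real.log (2*y)) (2*1/(2*x)) x :=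
    ((hasDerivAt_id x).const_mul 2).log h2x
  have d2 : HasDerivAt (fun y : ℝ => Real.log (2*(1-y))) (2*(0-1)/(2*(1-x))) x :=
    ((((hasDerivAt_const x (1:ℝ)).sub (hasDerivAt_id x))).const_mul 2).log h21x
  have dA : HasDerivAt (fun y : ℝ => y * Real.log (2*y))
      (1 * Real.log (2*x) + x * (2*1/(2*x))) x := (hasDerivAt_id x).mul d1
  have dB : HasDerivAt (fun y : ℝ => (1-y) * Real.log (2*(1-y)))
      ((0-1) * Real.log (2*(1-x)) + (1-x) * (2*(0-1)/(2*(1-x)))) x :=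
    ((hasDerivAt_const x (1:ℝ)).sub (hasDerivAt_id x)).mul d2
  have dC : HasDerivAt (fun y : ℝ => 2*(y-1/2)^2) (2 * (↑2 * (x - 1/2) ^ (2-1) * 1)) x :=
    (((hasDerivAt_id x).sub_const (1/2)).pow 2).const_mul 2
  have := (dA.add dB).sub dC
  refine this.congr_deriv ?_
  field_simp
  ring

private lemma Gf_nonneg {x : ℝ} (hx : x ∈ Set.Ioo (0:ℝ) 1) : 0 ≤ Gf x := by
  have hhalf : Gf (1/2) = 0 := by
    simp [Gf]
    norm_num
  have hmain : ∀ y ∈ Set.Ico (1/2 : ℝ) 1, 0 ≤ Gf y := by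
    have hmono : MonotoneOn Gf (Set.Ico (1/2 : ℝ) 1) := by
      apply monotoneOn_of_deriv_nonneg (convex_Ico _ _)
      · intro y hy
        have hy' : y ∈ Set.Ioo (0:ℝ) 1 := ⟨by linarith [hy.1], hy.2⟩
        exact ((Gf_hasDeriv hy').differentiableAt.continuousAt).continuousWithinAt
      · rw [interior_Ico]
        intro y hy
        have hy' : y ∈ Set.Ioo (0:ℝ) 1 := ⟨by linarith [hy.1], hy.2⟩
        exact (Gf_hasDeriv hy').differentiableAt.differentiableWithinAt
      · rw [interior_Ico]
        intro y hy
        have hy' : y ∈ Set.Ioo (0:ℝ) 1 := ⟨by linarith [hy.1], hy.2⟩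
        rw [(Gf_hasDeriv hy').deriv]
        have hy0 : (0:ℝ) < y := hy'.1
        have h1y : (0:ℝ) < 1 - y := by linarith [hy.2]
        have ht1 : (1:ℝ) ≤ y / (1-y) := by
          rw [le_div_iff₀ h1y]
          linarith [hy.1]
        have hlb := log_lb ht1
        have hlogeq : Real.log (2*y) - Real.log (2*(1-y)) = Real.log (y/(1-y)) := by
          rw [Real.log_div (ne_of_gt hy0) (ne_of_gt h1y),
            Real.log_mul two_ne_zero (ne_of_gt hy0),
            Real.log_mul two_ne_zero (ne_of_gt h1y)]
          ring
        have hargeq : 2 - 4 / (y/(1-y) + 1) = 4*y - 2 := by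
          have h : y/(1-y) + 1 = 1/(1-y) := by field_simp; ring
          have h2 : (4:ℝ) / (1/(1-y)) = 4 * (1-y) := by
            rw [div_div_eq_mul_div, div_one]
          rw [h, h2]
          ring
        rw [hlogeq]
        linarith [hlb, hargeq.symm.le]
    intro y hy
    have := hmono (by constructor <;> norm_num) hy hy.1
    rw [hhalf] at this
    exact this
  rcases le_or_gt (1/2 : ℝ) x with h | h
  · exact hmain x ⟨h, hx.2⟩
  · have hsym : Gf x = Gf (1 - x) := by
      simp only [Gf]
      have e1 : 1 - (1 - x) = x := by ring
      rw [e1]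
      ring_nf
    rw [hsym]
    exact hmain (1-x) ⟨by linarith, by linarith [hx.1]⟩

private lemma pointJS {a b : ℝ} (ha : 0 < a) (hb : 0 < b) :
    (a-b)^2 / (2*(a+b)) ≤ a * Real.log (a/((a+b)/2)) + b * Real.log (b/((a+b)/2)) := by
  have hs : 0 < a + b := by linarith
  have hx : a/(a+b) ∈ Set.Ioo (0:ℝ) 1 :=
    ⟨div_pos ha hs, (div_lt_one hs).2 (by linarith)⟩
  have hG := Gf_nonneg hx
  simp only [Gf] at hG
  have e1 : 2*(a/(a+b)) = a/((a+b)/2) := by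
    field_simp
  have e2 : 2*(1 - a/(a+b)) = b/((a+b)/2) := by
    field_simp
    ring
  rw [e1, e2] at hG
  set L1 := Real.log (a/((a+b)/2))
  set L2 := Real.log (b/((a+b)/2))
  have h1 : a * L1 + b * L2 = (a+b) * ((a/(a+b))*L1 + (1 - a/(a+b))*L2) := by
    field_simp
    ring
  have h2 : (a+b) * (2*((a/(a+b)) - 1/2)^2) = (a-b)^2/(2*(a+b)) := by
    field_simp
    ring
  have h3 := mul_le_mul_of_nonneg_left (by linarith : 2*((a/(a+b)) - 1/2)^2 ≤ (a/(a+b))*L1 + (1 - a/(a+b))*L2) hs.le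
  rw [h2] at h3
  linarith [h1 ▸ h3]

private lemma chord {M t : ℝ} (hM : 1 < M) (ht1 : 1 ≤ t) (htM : t ≤ M) :
    t * Real.log t ≤ (t - 1) * (M * Real.log M / (M - 1)) := by
  have hM1 : (0:ℝ) < M - 1 := by linarith
  have hla : (0:ℝ) ≤ (M - t)/(M-1) := div_nonneg (by linarith) hM1.le
  have hlb : (0:ℝ) ≤ (t - 1)/(M-1) := div_nonneg (by linarith) hM1.le
  have hsum : (M - t)/(M-1) + (t - 1)/(M-1) = 1 := by field_simp; ring
  have hc := Real.convexOn_mul_log.2 (Set.mem_Ici.2 (by norm_num : (0:ℝ) ≤ 1))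
    (Set.mem_Ici.2 (by linarith : (0:ℝ) ≤ M)) hla hlb hsum
  have harg : ((M - t)/(M-1)) • (1:ℝ) + ((t - 1)/(M-1)) • M = t := by
    simp only [smul_eq_mul]
    field_simp
    ring
  rw [harg] at hc
  simp only [smul_eq_mul, Real.log_one, mul_one, mul_zero, zero_add] at hc
  calc t * Real.log t ≤ (t-1)/(M-1) * (M * Real.log M) := hc
    _ = (t - 1) * (M * Real.log M / (M - 1)) := by ring

private lemma KL_le_l1 {V : Type*} [Fintype V] {p q : V → ℝ} {M : ℝ} (hM : 1 < M)
    (hp0 : ∀ x, 0 < p x) (hq0 : ∀ x, 0 < q x)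
    (hp1 : ∑ x, p x = 1) (hq1 : ∑ x, q x = 1)
    (hr : ∀ x, max (p x / q x) (q x / p x) ≤ M) :
    KL p q ≤ Real.log M * (M/(M-1)) * ((∑ x, |p x - q x|)/2) := by
  have hM1 : (0:ℝ) < M - 1 := by linarith
  have hlogM : 0 ≤ Real.log M := Real.log_nonneg hM.le
  set C' : ℝ := M * Real.log M / (M - 1) with hC'
  have hC'nn : 0 ≤ C' := by positivity
  have point : ∀ x, p x * Real.log (p x / q x) ≤ C' * ((|p x - q x| + (p x - q x))/2) := by
    intro x
    rcases le_or_gt (q x) (p x) with h | h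
    · have habs : |p x - q x| = p x - q x := abs_of_nonneg (by linarith)
      rw [habs]
      have hhalf : (p x - q x + (p x - q x))/2 = p x - q x := by ring
      rw [hhalf]
      have ht1 : 1 ≤ p x / q x := (one_le_div (hq0 x)).2 h
      have htM : p x / q x ≤ M := le_trans (le_max_left _ _) (hr x)
      have hch := chord hM ht1 htM
      have := mul_le_mul_of_nonneg_left hch (hq0 x).le
      have e1 : q x * (p x / q x * Real.log (p x / q x)) = p x * Real.log (p x / q x) := by
        field_simp [(hq0 x).ne']
      have e2 : q x * ((p x / q x - 1) * (M * Real.log M / (M - 1))) =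
          (p x - q x) * C' := by
        rw [hC']
        field_simp [(hq0 x).ne']
      rw [e1, e2] at this
      linarith
    · have hlog : Real.log (p x / q x) ≤ 0 :=
        Real.log_nonpos (div_nonneg (hp0 x).le (hq0 x).le) ((div_le_one (hq0 x)).2 h.le)
      have hL : p x * Real.log (p x / q x) ≤ 0 :=
        mul_nonpos_of_nonneg_of_nonpos (hp0 x).le hlog
      have habs : |p x - q x| = -(p x - q x) := abs_of_neg (by linarith)
      rw [habs]
      have : (-(p x - q x) + (p x - q x))/2 = 0 := by ring
      rw [this, mul_zero]
      exact hL
  calc KL p q ≤ ∑ x, C' * ((|p x - q x| + (p x - q x))/2) :=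
        Finset.sum_le_sum (fun x _ => point x)
    _ = C' * (((∑ x, |p x - q x|) + ((∑ x, p x) - ∑ x, q x))/2) := by
        rw [← Finset.mul_sum]
        congr 1
        rw [← Finset.sum_div, Finset.sum_add_distrib, Finset.sum_sub_distrib]
    _ = Real.log M * (M/(M-1)) * ((∑ x, |p x - q x|)/2) := by
        rw [hp1, hq1, hC']
        ring

private lemma l1_sq_le_JS {V : Type*} [Fintype V] {p q : V → ℝ}
    (hp0 : ∀ x, 0 < p x) (hq0 : ∀ x, 0 < q x)
    (hp1 : ∑ x, p x = 1) (hq1 : ∑ x, q x = 1) :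
    (∑ x, |p x - q x|)^2 ≤ 8 * JS p q := by
  have hpq : ∀ x, 0 < p x + q x := fun x => by linarith [hp0 x, hq0 x]
  have cauchy := Finset.sum_sq_le_sum_mul_sum_of_sq_eq_mul Finset.univ
    (r := fun x => |p x - q x|) (f := fun x => (p x - q x)^2/(p x + q x))
    (g := fun x => p x + q x)
    (fun x _ => div_nonneg (sq_nonneg _) (hpq x).le) (fun x _ => (hpq x).le)
    (fun x _ => by rw [sq_abs, div_mul_cancel₀ _ (hpq x).ne'])
  have hsum2 : ∑ x, (p x + q x) = 2 := by
    rw [Finset.sum_add_distrib, hp1, hq1]; norm_num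
  rw [hsum2] at cauchy
  have hpt : ∀ x, (p x - q x)^2/(p x + q x) ≤
      2*(p x * Real.log (p x/((p x + q x)/2)) + q x * Real.log (q x/((p x + q x)/2))) := by
    intro x
    have := pointJS (hp0 x) (hq0 x)
    have e : (p x - q x)^2/(p x + q x) = 2*((p x - q x)^2/(2*(p x + q x))) := by
      rw [← mul_div_assoc, mul_div_mul_left _ _ (two_ne_zero)]
    rw [e]
    linarith
  have hEq : ∑ x, 2*(p x * Real.log (p x/((p x + q x)/2)) + q x * Real.log (q x/((p x + q x)/2)))
      = 4 * JS p q := by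
    have h4 : 4 * JS p q = 2*(∑ x, p x * Real.log (p x/((p x + q x)/2)))
        + 2*(∑ x, q x * Real.log (q x/((p x + q x)/2))) := by
      simp only [JS, KL]
      ring
    rw [h4, Finset.mul_sum, Finset.mul_sum, ← Finset.sum_add_distrib]
    apply Finset.sum_congr rfl
    intro x _
    ring
  have hJS : ∑ x, (p x - q x)^2/(p x + q x) ≤ 4 * JS p q := by
    rw [← hEq]
    exact Finset.sum_le_sum (fun x _ => hpt x)
  nlinarith [cauchy, hJS]

private lemma JS_nonneg {V : Type*} [Fintype V] {p q : V → ℝ}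
    (hp0 : ∀ x, 0 < p x) (hq0 : ∀ x, 0 < q x)
    (hp1 : ∑ x, p x = 1) (hq1 : ∑ x, q x = 1) : 0 ≤ JS p q := by
  nlinarith [l1_sq_le_JS hp0 hq0 hp1 hq1, sq_nonneg (∑ x, |p x - q x|)]

/-- The averaged KL divergence is controlled by the marginal information:
`(1/T)·Σ_t D_KL(p_t^u‖p_t^r) ≤ (log M)·(M/(M−1))·(√2/(1−α))·√((1/T)·Σ_t JS(p_t^d, p_t^r))`. -/
theorem avg_KL_le_MarI {V : Type*} [Fintype V] (T : ℕ) (hT : 1 ≤ T)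
    (pu pr : Fin T → V → ℝ) (α : ℝ) (hα : α ∈ Set.Ioo (0 : ℝ) 1)
    (M : ℝ) (hM : 1 < M)
    (hpu0 : ∀ t x, 0 < pu t x) (hpr0 : ∀ t x, 0 < pr t x)
    (hpu1 : ∀ t, ∑ x, pu t x = 1) (hpr1 : ∀ t, ∑ x, pr t x = 1)
    (hratio : ∀ t x, max (pu t x / pr t x) (pr t x / pu t x) ≤ M) :
    (1 / (T : ℝ)) * ∑ t, KL (pu t) (pr t) ≤
      Real.log M * (M / (M - 1)) * (Real.sqrt 2 / (1 - α)) *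
        Real.sqrt ((1 / (T : ℝ)) *
          ∑ t, JS (fun x => α * pr t x + (1 - α) * pu t x) (pr t)) := by
  obtain ⟨hα0, hα1⟩ := hα
  have h1α : (0:ℝ) < 1 - α := by linarith
  have hTpos : (0:ℝ) < (T:ℝ) := by exact_mod_cast Nat.lt_of_lt_of_le Nat.zero_lt_one hT
  have hM1 : (0:ℝ) < M - 1 := by linarith
  set C : ℝ := Real.log M * (M/(M-1)) with hC
  have hCnn : 0 ≤ C := mul_nonneg (Real.log_nonneg hM.le) (by positivity)
  -- facts about pd
  have hd0 : ∀ t x, 0 < α * pr t x + (1 - α) * pu t x := fun t x => by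
    have := hpr0 t x; have := hpu0 t x; nlinarith
  have hd1 : ∀ t, ∑ x, (α * pr t x + (1 - α) * pu t x) = 1 := fun t => by
    rw [Finset.sum_add_distrib, ← Finset.mul_sum, ← Finset.mul_sum, hpr1, hpu1]
    ring
  have hJSnn : ∀ t : Fin T, 0 ≤ JS (fun x => α * pr t x + (1 - α) * pu t x) (pr t) :=
    fun t => JS_nonneg (hd0 t) (hpr0 t) (hd1 t) (hpr1 t)
  -- per-t bound
  have key : ∀ t : Fin T, KL (pu t) (pr t) ≤
      C * (Real.sqrt 2 / (1-α)) *
        Real.sqrt (JS (fun x => α * pr t x + (1 - α) * pu t x) (pr t)) := by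
    intro t
    set J : ℝ := JS (fun x => α * pr t x + (1 - α) * pu t x) (pr t) with hJ
    have hKL := KL_le_l1 hM (hpu0 t) (hpr0 t) (hpu1 t) (hpr1 t) (hratio t)
    have habs : ∀ x, |α * pr t x + (1 - α) * pu t x - pr t x| = (1-α) * |pu t x - pr t x| := by
      intro x
      have e : α * pr t x + (1 - α) * pu t x - pr t x = (1-α)*(pu t x - pr t x) := by ring
      rw [e, abs_mul, abs_of_pos h1α]
    have hsum_abs : ∑ x, |pu t x - pr t x|
        = (∑ x, |α * pr t x + (1 - α) * pu t x - pr t x|)/(1-α) := by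
      rw [eq_div_iff h1α.ne', Finset.sum_mul]
      apply Finset.sum_congr rfl
      intro x _
      rw [habs x]
      ring
    have hsq := l1_sq_le_JS (hd0 t) (hpr0 t) (hd1 t) (hpr1 t)
    have hle : ∑ x, |α * pr t x + (1 - α) * pu t x - pr t x| ≤ Real.sqrt (8 * J) :=
      (Real.le_sqrt (Finset.sum_nonneg fun x _ => abs_nonneg _) (by linarith [hJSnn t])).2 hsq
    have sqrt8 : Real.sqrt (8 * J) = 2 * Real.sqrt 2 * Real.sqrt J := by
      rw [show (8:ℝ) = (2*Real.sqrt 2)^2 by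
            rw [mul_pow, Real.sq_sqrt (by norm_num : (0:ℝ) ≤ 2)]; norm_num,
        Real.sqrt_mul (sq_nonneg _), Real.sqrt_sq (by positivity)]
    calc KL (pu t) (pr t) ≤ C * ((∑ x, |pu t x - pr t x|)/2) := hKL
      _ = C * ((∑ x, |α * pr t x + (1 - α) * pu t x - pr t x|)/(1-α)/2) := by
          rw [hsum_abs]
      _ ≤ C * (Real.sqrt (8*J)/(1-α)/2) := by gcongr
      _ = C * (Real.sqrt 2 / (1-α)) * Real.sqrt J := by
          rw [sqrt8]; ring
  -- sum over t
  have sum_le : ∑ t, KL (pu t) (pr t) ≤ C * (Real.sqrt 2/(1-α)) *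
      ∑ t, Real.sqrt (JS (fun x => α * pr t x + (1 - α) * pu t x) (pr t)) := by
    rw [Finset.mul_sum]
    exact Finset.sum_le_sum (fun t _ => key t)
  -- Jensen for sqrt
  set S : ℝ := ∑ t, JS (fun x => α * pr t x + (1 - α) * pu t x) (pr t) with hS
  have hSnn : 0 ≤ S := Finset.sum_nonneg fun t _ => hJSnn t
  have jensen : ∑ t, Real.sqrt (JS (fun x => α * pr t x + (1 - α) * pu t x) (pr t))
      ≤ Real.sqrt ((T:ℝ) * S) := by
    have c2 := Finset.sum_sq_le_sum_mul_sum_of_sq_eq_mul Finset.univ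
      (r := fun t : Fin T => Real.sqrt (JS (fun x => α * pr t x + (1 - α) * pu t x) (pr t)))
      (f := fun _ => (1:ℝ))
      (g := fun t : Fin T => JS (fun x => α * pr t x + (1 - α) * pu t x) (pr t))
      (fun _ _ => zero_le_one) (fun t _ => hJSnn t)
      (fun t _ => by rw [Real.sq_sqrt (hJSnn t), one_mul])
    rw [Finset.sum_const, Finset.card_univ, Fintype.card_fin, nsmul_eq_mul, mul_one] at c2
    exact (Real.le_sqrt (Finset.sum_nonneg fun t _ => Real.sqrt_nonneg _)
      (by positivity)).2 c2
  have hsqrt_eq : Real.sqrt ((1/(T:ℝ)) * S) = (1/(T:ℝ)) * Real.sqrt ((T:ℝ) * S) := by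
    rw [show (1/(T:ℝ)) * S = (1/(T:ℝ))^2 * ((T:ℝ)*S) by field_simp,
      Real.sqrt_mul (sq_nonneg _), Real.sqrt_sq (by positivity)]
  calc (1 / (T : ℝ)) * ∑ t, KL (pu t) (pr t)
      ≤ (1 / (T : ℝ)) * (C * (Real.sqrt 2/(1-α)) *
        ∑ t, Real.sqrt (JS (fun x => α * pr t x + (1 - α) * pu t x) (pr t))) :=
        mul_le_mul_of_nonneg_left sum_le (by positivity)
    _ ≤ (1 / (T : ℝ)) * (C * (Real.sqrt 2/(1-α)) * Real.sqrt ((T:ℝ) * S)) := by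
        have hnn : 0 ≤ C * (Real.sqrt 2/(1-α)) := mul_nonneg hCnn (by positivity)
        gcongr
    _ = C * (Real.sqrt 2/(1-α)) * Real.sqrt ((1/(T:ℝ)) * S) := by
        rw [hsqrt_eq]; ring
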